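/- arXiv:2210.11996 — 4 statements merged into one kernel-verified Lean document; each statement's English description precedes it below -/
import Mathlib

section
/- In a simple graph, if a vertex v lies on a simple cycle (a cycle of length at least 3 with no repeated vertices), then v also lies on a chordless (induced) cycle, i.e., a simple cycle in which no two non-consecutive vertices of the cycle are adjacent. -/
/-- `p 0, p 1, ..., p (k-1)` is a walk in `G` (consecutive vertices adjacent). -/
def IsPathOn {V : Type*} (G : SimpleGraph V) (p : ℕ → V) (k : ℕ) : Prop :=
  ∀ i, i + 1 < k → G.Adj (p i) (p (i + 1))

/-- the first `k` vertices of `p` are pairwise distinct. -/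
def SimpleOn {V : Type*} (p : ℕ → V) (k : ℕ) : Prop :=
  ∀ i j, i < k → j < k → p i = p j → i = j

/-- `p 0, ..., p (k-1)` is a simple cycle: length at least 3, distinct vertices,
consecutive vertices adjacent, and the last vertex adjacent to the first. -/
def IsSimpleCycle {V : Type*} (G : SimpleGraph V) (p : ℕ → V) (k : ℕ) : Prop :=
  3 ≤ k ∧ SimpleOn p k ∧ IsPathOn G p k ∧ G.Adj (p (k - 1)) (p 0)

/-- indices `i` and `j` are (cyclically) consecutive positions on a cycle of length `k`. -/
def CycConsec (k i j : ℕ) : Prop :=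
  i + 1 = j ∨ j + 1 = i ∨ (i = 0 ∧ j = k - 1) ∨ (j = 0 ∧ i = k - 1)

/-- A chordless cycle: a simple cycle in which no two non-consecutive cycle
vertices are adjacent. -/
def IsChordlessCycle {V : Type*} (G : SimpleGraph V) (p : ℕ → V) (k : ℕ) : Prop :=
  IsSimpleCycle G p k ∧
    ∀ i j, i < k → j < k → i ≠ j → ¬ CycConsec k i j → ¬ G.Adj (p i) (p j)

private lemma adjMod {V : Type*} {G : SimpleGraph V} {p : ℕ → V} {k : ℕ}
    (h : IsSimpleCycle G p k) (t : ℕ) : G.Adj (p (t % k)) (p ((t + 1) % k)) := by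
  obtain ⟨hk, _, hpath, hclose⟩ := h
  have hk0 : 0 < k := by omega
  have ht : t % k < k := Nat.mod_lt _ hk0
  have hmod : (t + 1) % k = (t % k + 1) % k := by
    conv_lhs => rw [Nat.add_mod]
    rw [Nat.mod_eq_of_lt (show 1 < k by omega)]
  rcases Nat.lt_or_ge (t % k + 1) k with h1 | h1
  · rw [hmod, Nat.mod_eq_of_lt h1]
    exact hpath _ h1
  · have he : t % k = k - 1 := by omega
    have he2 : (t % k + 1) % k = 0 := by
      have : t % k + 1 = k := by omega
      rw [this, Nat.mod_self]
    rw [hmod, he2, he]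
    exact hclose

private lemma rot_cycle {V : Type*} {G : SimpleGraph V} {p : ℕ → V} {k : ℕ}
    (h : IsSimpleCycle G p k) (i : ℕ) :
    IsSimpleCycle G (fun j => p ((j + i) % k)) k := by
  have hk : 3 ≤ k := h.1
  have hk0 : 0 < k := by omega
  refine ⟨hk, ?_, ?_, ?_⟩
  · intro a b ha hb hab
    have h2 : (a + i) % k = (b + i) % k :=
      h.2.1 _ _ (Nat.mod_lt _ hk0) (Nat.mod_lt _ hk0) hab
    have h3 : a % k = b % k := Nat.ModEq.add_right_cancel' i h2
    rw [Nat.mod_eq_of_lt ha, Nat.mod_eq_of_lt hb] at h3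
    exact h3
  · intro j hj
    have e : j + 1 + i = j + i + 1 := by omega
    simp only [e]
    exact adjMod h (j + i)
  · have e : (k - 1 + i + 1) % k = (0 + i) % k := by
      have e2 : k - 1 + i + 1 = k + i := by omega
      rw [e2, Nat.add_mod_left, Nat.zero_add]
    have := adjMod h (k - 1 + i)
    rw [e] at this
    exact this

private lemma step {V : Type*} {G : SimpleGraph V} {p : ℕ → V} {k a b : ℕ}
    (hc : IsSimpleCycle G p k) (hab : a < b) (hb : b < k)
    (hnc : ¬ CycConsec k a b) (hadj : G.Adj (p a) (p b)) :
    ∃ m, m < k ∧ ∃ q : ℕ → V, IsSimpleCycle G q m ∧ q 0 = p 0 := by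
  obtain ⟨hk, hsimp, hpath, hclose⟩ := hc
  simp only [CycConsec, not_or] at hnc
  obtain ⟨h1, h2, h3, h4⟩ := hnc
  have hb2 : a + 2 ≤ b := by omega
  have hnot : ¬ (a = 0 ∧ b = k - 1) := h3
  set m := a + 1 + (k - b) with hm
  have hmk : m < k := by omega
  have hm3 : 3 ≤ m := by omega
  refine ⟨m, hmk, fun j => if j ≤ a then p j else p (b + (j - (a + 1))), ?_, ?_⟩
  · refine ⟨hm3, ?_, ?_, ?_⟩
    · intro x y hx hy hxy
      by_cases hxa : x ≤ a <;> by_cases hya : y ≤ a <;>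
        simp only [hxa, hya, if_true, if_false, if_pos, if_neg, not_false_iff] at hxy
      · exact hsimp x y (by omega) (by omega) hxy
      · have := hsimp x (b + (y - (a + 1))) (by omega) (by omega) hxy
        omega
      · have := hsimp (b + (x - (a + 1))) y (by omega) (by omega) hxy
        omega
      · have := hsimp (b + (x - (a + 1))) (b + (y - (a + 1))) (by omega) (by omega) hxy
        omega
    · intro j hj
      by_cases hja : j ≤ a
      · by_cases hja1 : j + 1 ≤ a
        · simp only [hja, hja1, if_true]
          exact hpath j (by omega)
        · have hje : j = a := by omega
          simp only [hja, hja1, if_true, if_false, if_pos, if_neg, not_false_iff]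
          have e : b + (j + 1 - (a + 1)) = b := by omega
          rw [e, hje]
          exact hadj
      · have hja1 : ¬ (j + 1 ≤ a) := by omega
        simp only [hja, hja1, if_false, if_neg, not_false_iff]
        have e : b + (j + 1 - (a + 1)) = b + (j - (a + 1)) + 1 := by omega
        rw [e]
        exact hpath _ (by omega)
    · have hn : ¬ (m - 1 ≤ a) := by omega
      simp only [hn, if_false, if_neg, not_false_iff, Nat.zero_le, if_true, if_pos]
      have e : b + (m - 1 - (a + 1)) = k - 1 := by omega
      rw [e]
      exact hclose
  · simp

private lemma aux {V : Type*} (G : SimpleGraph V) :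
    ∀ k, ∀ p : ℕ → V, IsSimpleCycle G p k →
      ∃ q m, IsChordlessCycle G q m ∧ ∃ j, j < m ∧ q j = p 0 := by
  intro k
  induction k using Nat.strong_induction_on with
  | _ k IH =>
    intro p hc
    have hk3 := hc.1
    by_cases hch : ∀ a b, a < k → b < k → a ≠ b → ¬ CycConsec k a b → ¬ G.Adj (p a) (p b)
    · exact ⟨p, k, ⟨hc, hch⟩, 0, by omega, rfl⟩
    · push_neg at hch
      obtain ⟨a, b, ha, hb, hne, hnc, hadj⟩ := hch
      have key : ∀ a b, a < b → b < k → ¬ CycConsec k a b → G.Adj (p a) (p b) →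
          ∃ q m, IsChordlessCycle G q m ∧ ∃ j, j < m ∧ q j = p 0 := by
        intro a b hab hb hnc hadj
        obtain ⟨m, hmk, q, hq, hq0⟩ := step hc hab hb hnc hadj
        obtain ⟨r, n, hr, j, hjn, hrj⟩ := IH m hmk q hq
        exact ⟨r, n, hr, j, hjn, by rw [hrj, hq0]⟩
      rcases Nat.lt_or_ge a b with hab | hab
      · exact key a b hab hb hnc hadj
      · have hba : b < a := by omega
        have hnc' : ¬ CycConsec k b a := by
          simp only [CycConsec, not_or] at hnc ⊢
          tauto
        exact key b a hba ha hnc' hadj.symm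

/-- If a vertex `v` lies on a simple cycle, then it lies on a chordless cycle. -/
theorem vertex_on_simple_cycle_lies_on_chordless_cycle
    {V : Type*} (G : SimpleGraph V) (v : V) (p : ℕ → V) (k : ℕ)
    (hcyc : IsSimpleCycle G p k) (i : ℕ) (hi : i < k) (hv : p i = v) :
    ∃ (q : ℕ → V) (m : ℕ), IsChordlessCycle G q m ∧ ∃ j, j < m ∧ q j = v := by
  obtain ⟨q, m, hq, j, hjm, hqj⟩ := aux G k (fun j => p ((j + i) % k)) (rot_cycle hcyc i)
  refine ⟨q, m, hq, j, hjm, ?_⟩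
  rw [hqj]
  simp only [Nat.zero_add, Nat.mod_eq_of_lt hi]
  exact hv
end

section
/- In a hypergraph H, suppose a node v lies on a simple cycle v = v_1, v_2, ..., v_ℓ, v_1 (ℓ ≥ 3, all vertices distinct, consecutive vertices are neighbors, i.e., share a hyperedge). Then at least one of the following holds: (1) v lies on a chordless cycle of H; (2) some hyperedge of H contains all three of v, v_2, and v_ℓ; or (3) there is a hand-fan centered at v from v_2 to v_ℓ, i.e., a chordless path u_1 = v_2, ..., u_k = v_ℓ with k ≥ 3 such that for every 1 ≤ i < k there is a hyperedge containing {v, u_i, u_{i+1}} and v ≠ u_i for all i. -/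
/-- Two vertices are neighbors in a hypergraph `H` (given by its set of
hyperedges) if they are distinct and share a hyperedge. -/
def HAdj {V : Type*} (H : Set (Set V)) (a b : V) : Prop :=
  a ≠ b ∧ ∃ e ∈ H, a ∈ e ∧ b ∈ e

def HIsPathOn {V : Type*} (H : Set (Set V)) (p : ℕ → V) (k : ℕ) : Prop :=
  ∀ i, i + 1 < k → HAdj H (p i) (p (i + 1))

def HChordlessOn {V : Type*} (H : Set (Set V)) (p : ℕ → V) (k : ℕ) : Prop :=
  ∀ i j, j < k → i + 1 < j → ¬ HAdj H (p i) (p j)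

/-- A chordless path in a hypergraph: a simple path where no two
non-consecutive vertices are neighbors. -/
def HChordlessPath {V : Type*} (H : Set (Set V)) (p : ℕ → V) (k : ℕ) : Prop :=
  HIsPathOn H p k ∧ SimpleOn p k ∧ HChordlessOn H p k

/-- A simple cycle in a hypergraph: length at least 3, all vertices distinct,
consecutive vertices neighbors (cyclically). -/
def HSimpleCycle {V : Type*} (H : Set (Set V)) (p : ℕ → V) (k : ℕ) : Prop :=
  3 ≤ k ∧ SimpleOn p k ∧ HIsPathOn H p k ∧ HAdj H (p (k - 1)) (p 0)

/-- A chordless cycle in a hypergraph: a simple cycle in which no two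
non-consecutive vertices are neighbors and no single hyperedge contains all
cycle vertices. -/
def HChordlessCycle {V : Type*} (H : Set (Set V)) (p : ℕ → V) (k : ℕ) : Prop :=
  HSimpleCycle H p k ∧
    (∀ i j, i < k → j < k → i ≠ j → ¬ CycConsec k i j → ¬ HAdj H (p i) (p j)) ∧
    ¬ ∃ e ∈ H, ∀ i, i < k → p i ∈ e

/-- A hand-fan from `u 0` to `u (k-1)` centered at `v`: a chordless path of at
least 3 vertices, a hyperedge containing `{v, u i, u (i+1)}` for each `i`, and
`v` distinct from all path vertices. -/
def HandFan {V : Type*} (H : Set (Set V)) (v : V) (u : ℕ → V) (k : ℕ) : Prop :=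
  3 ≤ k ∧ HChordlessPath H u k ∧
    (∀ i, i + 1 < k → ∃ e ∈ H, v ∈ e ∧ u i ∈ e ∧ u (i + 1) ∈ e) ∧
    (∀ i, i < k → v ≠ u i)

section Aux

variable {V : Type*}

lemma hadj_symm {H : Set (Set V)} {a b : V} (h : HAdj H a b) : HAdj H b a := by
  obtain ⟨hne, e, he, ha, hb⟩ := h
  exact ⟨hne.symm, e, he, hb, ha⟩

/-- A "fan walk" from `a` to `b` centered at `v`. -/
def VFan (H : Set (Set V)) (v a b : V) : Prop :=
  ∃ n, ∃ w : ℕ → V, 2 ≤ n ∧ w 0 = a ∧ w (n - 1) = b ∧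
    (∀ i, i < n → v ≠ w i) ∧
    (∀ i, i + 1 < n → ∃ e ∈ H, v ∈ e ∧ w i ∈ e ∧ w (i + 1) ∈ e)

lemma vfan_glue {H : Set (Set V)} {v a b c : V}
    (h1 : VFan H v a c) (h2 : VFan H v c b) : VFan H v a b := by
  obtain ⟨n1, w1, hn1, hw10, hw1e, hv1, he1⟩ := h1
  obtain ⟨n2, w2, hn2, hw20, hw2e, hv2, he2⟩ := h2
  refine ⟨n1 + n2 - 1, fun m => if m < n1 then w1 m else w2 (m - (n1 - 1)), by omega, ?_, ?_, ?_, ?_⟩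
  · beta_reduce; rw [if_pos (by omega)]; exact hw10
  · beta_reduce; rw [if_neg (by omega)]
    have : n1 + n2 - 1 - 1 - (n1 - 1) = n2 - 1 := by omega
    rw [this]; exact hw2e
  · intro i hi
    beta_reduce
    by_cases h : i < n1
    · rw [if_pos h]; exact hv1 i h
    · rw [if_neg h]; exact hv2 _ (by omega)
  · intro i hi
    beta_reduce
    rcases lt_trichotomy (i + 1) n1 with h | h | h
    · rw [if_pos (by omega), if_pos h]; exact he1 i h
    · rw [if_pos (by omega), if_neg (by omega)]
      have h1' : i = n1 - 1 := by omega
      have h2' : i + 1 - (n1 - 1) = 1 := by omega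
      rw [h2', h1', hw1e]
      obtain ⟨e, he, hve, h0, h1⟩ := he2 0 (by omega)
      exact ⟨e, he, hve, hw20 ▸ h0, h1⟩
    · rw [if_neg (by omega), if_neg (by omega)]
      have h2' : i + 1 - (n1 - 1) = (i - (n1 - 1)) + 1 := by omega
      rw [h2']
      exact he2 (i - (n1 - 1)) (by omega)

lemma vfan_of_edge {H : Set (Set V)} {v a b : V} {e : Set V} (he : e ∈ H)
    (hve : v ∈ e) (ha : a ∈ e) (hb : b ∈ e) (hva : v ≠ a) (hvb : v ≠ b) :
    VFan H v a b := by
  refine ⟨2, fun m => if m = 0 then a else b, le_refl 2, by simp, by simp, ?_, ?_⟩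
  · intro i hi
    by_cases h : i = 0 <;> simp [h, hva, hvb]
  · intro i hi
    have : i = 0 := by omega
    subst this
    exact ⟨e, he, hve, by simp [ha], by simp [hb]⟩

lemma vfan_of_handfan {H : Set (Set V)} {v a b : V} {u : ℕ → V} {m : ℕ}
    (hf : HandFan H v u m) (h0 : u 0 = a) (he : u (m - 1) = b) : VFan H v a b := by
  obtain ⟨hm, hpath, hedges, hne⟩ := hf
  exact ⟨m, u, by omega, h0, he, hne, hedges⟩

lemma fan_lemma {H : Set (Set V)} {v a b : V} (hab : a ≠ b) (hfan : VFan H v a b) :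
    (∃ (q : ℕ → V) (m : ℕ), HChordlessCycle H q m ∧ ∃ j, j < m ∧ q j = v) ∨
    (∃ e ∈ H, v ∈ e ∧ a ∈ e ∧ b ∈ e) ∨
    (∃ (u : ℕ → V) (m : ℕ), HandFan H v u m ∧ u 0 = a ∧ u (m - 1) = b) := by
  classical
  have hex : ∃ n, ∃ w : ℕ → V, 2 ≤ n ∧ w 0 = a ∧ w (n - 1) = b ∧
      (∀ i, i < n → v ≠ w i) ∧
      (∀ i, i + 1 < n → ∃ e ∈ H, v ∈ e ∧ w i ∈ e ∧ w (i + 1) ∈ e) := hfan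
  obtain ⟨n, ⟨w, hn2, hw0, hwe, hvne, hedge⟩, hmin⟩ :
      ∃ n, (∃ w : ℕ → V, 2 ≤ n ∧ w 0 = a ∧ w (n - 1) = b ∧
        (∀ i, i < n → v ≠ w i) ∧
        (∀ i, i + 1 < n → ∃ e ∈ H, v ∈ e ∧ w i ∈ e ∧ w (i + 1) ∈ e)) ∧
      ∀ m, m < n → ¬ (∃ w : ℕ → V, 2 ≤ m ∧ w 0 = a ∧ w (m - 1) = b ∧
        (∀ i, i < m → v ≠ w i) ∧
        (∀ i, i + 1 < m → ∃ e ∈ H, v ∈ e ∧ w i ∈ e ∧ w (i + 1) ∈ e)) :=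
    ⟨Nat.find hex, Nat.find_spec hex, fun m hm => Nat.find_min hex hm⟩
  -- Claim A: no hyperedge contains v and two non-consecutive walk vertices
  have claimA : ∀ s t, t < n → s + 2 ≤ t → ¬ ∃ e ∈ H, v ∈ e ∧ w s ∈ e ∧ w t ∈ e := by
    rintro s t ht hst ⟨e, heH, hve, hws, hwt⟩
    refine hmin (n - (t - s - 1)) (by omega)
      ⟨fun m => if m ≤ s then w m else w (m + (t - s - 1)), by omega, ?_, ?_, ?_, ?_⟩
    · beta_reduce; rw [if_pos (by omega)]; exact hw0
    · beta_reduce; rw [if_neg (by omega),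
        show n - (t - s - 1) - 1 + (t - s - 1) = n - 1 from by omega]
      exact hwe
    · intro i hi
      beta_reduce
      by_cases h : i ≤ s
      · rw [if_pos h]; exact hvne i (by omega)
      · rw [if_neg h]; exact hvne _ (by omega)
    · intro i hi
      beta_reduce
      rcases lt_trichotomy i s with h | h | h
      · rw [if_pos (by omega), if_pos (by omega)]; exact hedge i (by omega)
      · subst h
        rw [if_pos (by omega), if_neg (by omega),
          show i + 1 + (t - i - 1) = t from by omega]
        exact ⟨e, heH, hve, hws, hwt⟩
      · rw [if_neg (by omega), if_neg (by omega),
          show i + 1 + (t - s - 1) = (i + (t - s - 1)) + 1 from by omega]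
        exact hedge _ (by omega)
  -- Claim B: the walk is simple
  have claimB : ∀ s t, s < t → t < n → w s ≠ w t := by
    intro s t hst ht heq
    by_cases hend : s = 0 ∧ t = n - 1
    · exact hab (by rw [← hw0, ← hwe, ← hend.1, ← hend.2, heq])
    · refine hmin (n - (t - s)) (by omega)
        ⟨fun m => if m ≤ s then w m else w (m + (t - s)), by omega, ?_, ?_, ?_, ?_⟩
      · beta_reduce; rw [if_pos (by omega)]; exact hw0
      · beta_reduce
        by_cases hlast : t = n - 1
        · rw [if_pos (by omega), show n - (t - s) - 1 = s from by omega, heq, hlast]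
          exact hwe
        · rw [if_neg (by omega),
            show n - (t - s) - 1 + (t - s) = n - 1 from by omega]
          exact hwe
      · intro i hi
        beta_reduce
        by_cases h : i ≤ s
        · rw [if_pos h]; exact hvne i (by omega)
        · rw [if_neg h]; exact hvne _ (by omega)
      · intro i hi
        beta_reduce
        rcases lt_trichotomy i s with h | h | h
        · rw [if_pos (by omega), if_pos (by omega)]; exact hedge i (by omega)
        · subst h
          rw [if_pos (by omega), if_neg (by omega),
            show i + 1 + (t - i) = t + 1 from by omega, heq]
          exact hedge t (by omega)
        · rw [if_neg (by omega), if_neg (by omega),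
            show i + 1 + (t - s) = (i + (t - s)) + 1 from by omega]
          exact hedge _ (by omega)
  by_cases hch : ∃ s t, t < n ∧ s + 2 ≤ t ∧ HAdj H (w s) (w t)
  · -- a chord gives a chordless triangle through v
    obtain ⟨s, t, ht, hst, hadj⟩ := hch
    left
    set q : ℕ → V := fun m => if m = 0 then v else if m = 1 then w s else w t with hq
    have q0 : q 0 = v := rfl
    have q1 : q 1 = w s := rfl
    have q2 : q 2 = w t := rfl
    have hvs : v ≠ w s := hvne s (by omega)
    have hvt : v ≠ w t := hvne t (by omega)
    refine ⟨q, 3, ⟨⟨le_refl 3, ?_, ?_, ?_⟩, ?_, ?_⟩, 0, by omega, q0⟩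
    · -- simple
      intro x y hx hy hxy
      interval_cases x <;> interval_cases y <;> simp only [q0, q1, q2] at hxy <;>
        first
          | rfl
          | exact absurd hxy hvs
          | exact absurd hxy (Ne.symm hvs)
          | exact absurd hxy hvt
          | exact absurd hxy (Ne.symm hvt)
          | exact absurd hxy hadj.1
          | exact absurd hxy (Ne.symm hadj.1)
    · -- path
      intro i hi
      have hi2 : i < 2 := by omega
      interval_cases i
      · obtain ⟨e, he, hve, hws, _⟩ := hedge s (by omega)
        exact ⟨hvs, e, he, hve, hws⟩
      · exact hadj
    · -- closing
      obtain ⟨e, he, hve, _, hwt⟩ := hedge (t - 1) (by omega)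
      rw [show t - 1 + 1 = t from by omega] at hwt
      exact ⟨Ne.symm hvt, e, he, hwt, hve⟩
    · -- no non-consecutive pairs in a triangle
      intro i j hi hj hij hcc
      exact absurd (show CycConsec 3 i j by unfold CycConsec; omega) hcc
    · -- no hyperedge contains all three
      rintro ⟨e, he, hall⟩
      exact claimA s t ht hst
        ⟨e, he, hall 0 (by omega), hall 1 (by omega), hall 2 (by omega)⟩
  · -- no chord: the walk is a chordless path
    push_neg at hch
    rcases eq_or_lt_of_le hn2 with h2 | h3
    · obtain ⟨e, he, hve, h0, h1⟩ := hedge 0 (by omega)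
      right; left
      refine ⟨e, he, hve, hw0 ▸ h0, ?_⟩
      rw [← hwe, ← h2]; exact h1
    · right; right
      have hsimple : SimpleOn w n := by
        intro i j hi hj heq
        rcases lt_trichotomy i j with h | h | h
        · exact absurd heq (claimB i j h hj)
        · exact h
        · exact absurd heq.symm (claimB j i h hi)
      refine ⟨w, n, ⟨by omega, ⟨?_, hsimple, ?_⟩, hedge, hvne⟩, hw0, hwe⟩
      · intro i hi
        obtain ⟨e, he, hve, h0, h1⟩ := hedge i hi
        refine ⟨fun heq => ?_, e, he, h0, h1⟩
        have := hsimple i (i + 1) (by omega) hi heq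
        omega
      · intro i j hj hij
        exact hch i j hj (by omega)

lemma main_aux {H : Set (Set V)} {v : V} :
    ∀ k, ∀ p : ℕ → V, HSimpleCycle H p k → p 0 = v →
    (∃ (q : ℕ → V) (m : ℕ), HChordlessCycle H q m ∧ ∃ j, j < m ∧ q j = v) ∨
    (∃ e ∈ H, v ∈ e ∧ p 1 ∈ e ∧ p (k - 1) ∈ e) ∨
    (∃ (u : ℕ → V) (m : ℕ), HandFan H v u m ∧ u 0 = p 1 ∧ u (m - 1) = p (k - 1)) := by
  intro k
  induction k using Nat.strong_induction_on with
  | _ k IH =>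
  intro p hcyc hv
  obtain ⟨hk3, hsimp, hpath, hclose⟩ := hcyc
  by_cases hbig : ∃ e ∈ H, ∀ i, i < k → p i ∈ e
  · obtain ⟨e, he, hall⟩ := hbig
    exact Or.inr (Or.inl ⟨e, he, hv ▸ hall 0 (by omega), hall 1 (by omega),
      hall (k - 1) (by omega)⟩)
  by_cases hch : ∃ i j, j < k ∧ i + 2 ≤ j ∧ ¬(i = 0 ∧ j = k - 1) ∧ HAdj H (p i) (p j)
  case neg =>
    -- no chord: p itself is a chordless cycle through v
    left
    refine ⟨p, k, ⟨⟨hk3, hsimp, hpath, hclose⟩, ?_, hbig⟩, 0, by omega, hv⟩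
    intro i j hi hj hij hcc hadj
    rcases lt_or_gt_of_ne hij with h | h
    · exact hch ⟨i, j, hj, by unfold CycConsec at hcc; omega,
        by unfold CycConsec at hcc; omega, hadj⟩
    · exact hch ⟨j, i, hi, by unfold CycConsec at hcc; omega,
        by unfold CycConsec at hcc; omega, hadj_symm hadj⟩
  case pos =>
  obtain ⟨i, j, hj, hij2, hnotend, hadj⟩ := hch
  have hvp : ∀ t, 0 < t → t < k → v ≠ p t := by
    intro t ht htk h
    have h0 : p 0 = p t := by rw [hv]; exact h
    have := hsimp 0 t (by omega) htk h0
    omega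
  by_cases hi1 : 1 ≤ i
  · -- chord avoiding v : shorten the cycle
    set m := k - (j - i - 1) with hm
    set q : ℕ → V := fun t => if t ≤ i then p t else p (t + (j - i - 1)) with hqdef
    have hqval : ∀ t, q t = if t ≤ i then p t else p (t + (j - i - 1)) := fun _ => rfl
    have hqsimp : SimpleOn q m := by
      intro x y hx hy hxy
      rw [hqval x, hqval y] at hxy
      split_ifs at hxy with h1 h2 h2
      · exact hsimp x y (by omega) (by omega) hxy
      · have := hsimp x (y + (j - i - 1)) (by omega) (by omega) hxy; omega
      · have := hsimp (x + (j - i - 1)) y (by omega) (by omega) hxy; omega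
      · have := hsimp (x + (j - i - 1)) (y + (j - i - 1)) (by omega) (by omega) hxy; omega
    have hqpath : HIsPathOn H q m := by
      intro t htm
      rw [hqval t, hqval (t + 1)]
      split_ifs with h1 h2 h2
      · exact hpath t (by omega)
      · have hti : t = i := by omega
        subst hti
        rw [show t + 1 + (j - t - 1) = j from by omega]
        exact hadj
      · exact absurd h2 (by omega)
      · rw [show t + 1 + (j - i - 1) = (t + (j - i - 1)) + 1 from by omega]
        exact hpath _ (by omega)
    have hqclose : HAdj H (q (m - 1)) (q 0) := by
      rw [hqval (m - 1), hqval 0, if_pos (Nat.zero_le i), if_neg (by omega),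
        show m - 1 + (j - i - 1) = k - 1 from by omega]
      exact hclose
    have hq0v : q 0 = v := by rw [hqval 0, if_pos (Nat.zero_le i)]; exact hv
    have e1 : q 1 = p 1 := by rw [hqval 1, if_pos hi1]
    have e2 : q (m - 1) = p (k - 1) := by
      rw [hqval (m - 1), if_neg (by omega),
        show m - 1 + (j - i - 1) = k - 1 from by omega]
    rcases IH m (by omega) q ⟨by omega, hqsimp, hqpath, hqclose⟩ hq0v with h1 | h2 | h3
    · exact Or.inl h1
    · rw [e1, e2] at h2; exact Or.inr (Or.inl h2)
    · rw [e1, e2] at h3; exact Or.inr (Or.inr h3)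
  · -- chord at v : split into two cycles and glue the resulting fans
    have hi0 : i = 0 := by omega
    subst hi0
    have hj2 : j ≤ k - 2 := by omega
    -- first cycle: p 0, p 1, ..., p j
    have hcyc1 : HSimpleCycle H p (j + 1) := by
      refine ⟨by omega, fun x y hx hy => hsimp x y (by omega) (by omega),
        fun t ht => hpath t (by omega), ?_⟩
      rw [Nat.add_sub_cancel]
      exact hadj_symm hadj
    -- second cycle: p 0, p j, p (j+1), ..., p (k-1)
    set m2 := k - j + 1 with hm2
    set r : ℕ → V := fun t => if t = 0 then p 0 else p (t + (j - 1)) with hrdef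
    have hrval : ∀ t, r t = if t = 0 then p 0 else p (t + (j - 1)) := fun _ => rfl
    have hrsimp : SimpleOn r m2 := by
      intro x y hx hy hxy
      rw [hrval x, hrval y] at hxy
      split_ifs at hxy with h1 h2 h2
      · omega
      · have := hsimp 0 (y + (j - 1)) (by omega) (by omega) (h1 ▸ hxy); omega
      · have := hsimp (x + (j - 1)) 0 (by omega) (by omega) (h2 ▸ hxy); omega
      · have := hsimp (x + (j - 1)) (y + (j - 1)) (by omega) (by omega) hxy; omega
    have hrpath : HIsPathOn H r m2 := by
      intro t htm
      rw [hrval t, hrval (t + 1)]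
      split_ifs with h1 h2 h2
      · exact h2.elim
      · subst h1
        rw [show 0 + 1 + (j - 1) = j from by omega]
        exact hadj
      · exact h2.elim
      · rw [show t + 1 + (j - 1) = (t + (j - 1)) + 1 from by omega]
        exact hpath _ (by omega)
    have hrclose : HAdj H (r (m2 - 1)) (r 0) := by
      rw [hrval (m2 - 1), hrval 0, if_pos rfl, if_neg (by omega),
        show m2 - 1 + (j - 1) = k - 1 from by omega]
      exact hclose
    have hr0v : r 0 = v := by rw [hrval 0, if_pos rfl]; exact hv
    have er1 : r 1 = p j := by
      rw [hrval 1, if_neg (by omega), show 1 + (j - 1) = j from by omega]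
    have er2 : r (m2 - 1) = p (k - 1) := by
      rw [hrval (m2 - 1), if_neg (by omega),
        show m2 - 1 + (j - 1) = k - 1 from by omega]
    rcases IH (j + 1) (by omega) p hcyc1 hv with c1 | c2 | c3
    · exact Or.inl c1
    all_goals {
      rcases IH m2 (by omega) r ⟨by omega, hrsimp, hrpath, hrclose⟩ hr0v with d1 | d2 | d3
      · exact Or.inl d1
      all_goals {
        have vfan1 : VFan H v (p 1) (p j) := by
          first
            | (obtain ⟨e, he, hve, h1e, hje⟩ := c2
               rw [Nat.add_sub_cancel] at hje
               exact vfan_of_edge he hve h1e hje (hvp 1 (by omega) (by omega))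
                 (hvp j (by omega) (by omega)))
            | (obtain ⟨u, mu, hfan, hu0, hue⟩ := c3
               rw [Nat.add_sub_cancel] at hue
               exact vfan_of_handfan hfan hu0 hue)
        have vfan2 : VFan H v (p j) (p (k - 1)) := by
          first
            | (obtain ⟨e, he, hve, h1e, hje⟩ := d2
               rw [er1, er2] at *
               exact vfan_of_edge he hve (er1 ▸ h1e) (er2 ▸ hje)
                 (hvp j (by omega) (by omega)) (hvp (k - 1) (by omega) (by omega)))
            | (obtain ⟨u, mu, hfan, hu0, hue⟩ := d3
               rw [er1] at hu0
               rw [er2] at hue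
               exact vfan_of_handfan hfan hu0 hue)
        have hne1 : p 1 ≠ p (k - 1) := by
          intro h
          have := hsimp 1 (k - 1) (by omega) (by omega) h
          omega
        exact fan_lemma hne1 (vfan_glue vfan1 vfan2)
      }
    }

end Aux

/-- If a node `v` lies on a simple cycle `v = p 0, p 1, ..., p (k-1), p 0` in a
hypergraph, then: `v` lies on a chordless cycle, or some hyperedge contains `v`
and its two cycle neighbors, or there is a hand-fan centered at `v` from `p 1`
to `p (k-1)`. -/
theorem simple_cycle_implications
    {V : Type*} (H : Set (Set V)) (p : ℕ → V) (k : ℕ) (v : V)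
    (hcyc : HSimpleCycle H p k) (hv : p 0 = v) :
    (∃ (q : ℕ → V) (m : ℕ), HChordlessCycle H q m ∧ ∃ j, j < m ∧ q j = v) ∨
    (∃ e ∈ H, v ∈ e ∧ p 1 ∈ e ∧ p (k - 1) ∈ e) ∨
    (∃ (u : ℕ → V) (m : ℕ), HandFan H v u m ∧ u 0 = p 1 ∧ u (m - 1) = p (k - 1)) := by
  exact main_aux k p hcyc hv
end

section
/- Consider the correctness of the hypergraph encoding in the hyperclique reduction: let k ≥ 3 and let G be a tripartite graph with vertex sets V_1, V_2, and V_3 where V_3 is identified with the product U_3 × ... × U_k. Build a (k−1)-uniform hypergraph G' on vertex set V_1 ∪ V_2 ∪ U_3 ∪ ... ∪ U_k with hyperedges: {v_1, u_3, ..., u_k} for each edge (v_1, (u_3,...,u_k)) ∈ E_{1,3}; {v_2, u_3, ..., u_k} for each edge (v_2, (u_3,...,u_k)) ∈ E_{2,3}; and, for each edge (v_1, v_2) ∈ E_{1,2}, all sets {v_1, v_2} ∪ S where S picks one vertex from each of k−3 distinct sets among U_3,...,U_k. Then the k-element vertex sets {v_1, v_2, u_3, ..., u_k} that form k-hypercliques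 in G' are exactly those with (v_1,v_2) ∈ E_{1,2}, (v_1,(u_3,...,u_k)) ∈ E_{1,3}, and (v_2,(u_3,...,u_k)) ∈ E_{2,3}, i.e., they correspond exactly to the triangles of G. -/
/-- Vertex type of the hypergraph built from a tripartite graph whose third
part is the product `U^(k-2)`: vertices are `V1 ∪ V2 ∪ (U_3 ∪ ... ∪ U_k)`. -/
abbrev HVert (V1 V2 U : Type*) (k : ℕ) : Type _ := V1 ⊕ V2 ⊕ (Fin (k - 2) × U)

/-- The set of coordinate vertices representing the `V3`-vertex `u`. -/
def coordSet {V1 V2 U : Type*} [DecidableEq V1] [DecidableEq V2] [DecidableEq U]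
    {k : ℕ} (u : Fin (k - 2) → U) : Finset (HVert V1 V2 U k) :=
  Finset.univ.image fun i => Sum.inr (Sum.inr (i, u i))

/-- The `(k-1)`-uniform hypergraph encoding a tripartite graph with parts
`V1`, `V2`, `V3 = U^(k-2)` and edge relations `E12`, `E23`, `E13`. -/
def encodeHG {V1 V2 U : Type*} [DecidableEq V1] [DecidableEq V2] [DecidableEq U]
    (k : ℕ) (E12 : V1 → V2 → Prop)
    (E23 : V2 → (Fin (k - 2) → U) → Prop) (E13 : V1 → (Fin (k - 2) → U) → Prop) :
    Set (Finset (HVert V1 V2 U k)) :=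
  {e | (∃ v1 u, E13 v1 u ∧ e = insert (Sum.inl v1) (coordSet u))
     ∨ (∃ v2 u, E23 v2 u ∧ e = insert (Sum.inr (Sum.inl v2)) (coordSet u))
     ∨ (∃ (v1 : V1) (v2 : V2) (I : Finset (Fin (k - 2))) (f : Fin (k - 2) → U),
          E12 v1 v2 ∧ I.card = k - 3 ∧
          e = insert (Sum.inl v1) (insert (Sum.inr (Sum.inl v2))
                (I.image fun i => Sum.inr (Sum.inr (i, f i))))) }

/-- `S` is a `k`-hyperclique of the hypergraph `H`: it has `k` vertices and
every `(k-1)`-subset of it is a hyperedge. -/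
def IsHyperclique {W : Type*} (H : Set (Finset W)) (k : ℕ) (S : Finset W) : Prop :=
  S.card = k ∧ ∀ T ⊆ S, T.card = k - 1 → T ∈ H


section Aux

variable {V1 V2 U : Type*} [DecidableEq V1] [DecidableEq V2] [DecidableEq U] {k : ℕ}

lemma coord_injective (u : Fin (k - 2) → U) :
    Function.Injective (fun i : Fin (k - 2) =>
      (Sum.inr (Sum.inr (i, u i)) : HVert V1 V2 U k)) := by
  intro i j h
  simp only [Sum.inr.injEq, Prod.mk.injEq] at h
  exact h.1

lemma mem_coordSet {x : HVert V1 V2 U k} {u : Fin (k - 2) → U} :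
    x ∈ coordSet (V1 := V1) (V2 := V2) u ↔ ∃ i, x = Sum.inr (Sum.inr (i, u i)) := by
  simp [coordSet, eq_comm]

lemma card_coordSet (u : Fin (k - 2) → U) :
    (coordSet (V1 := V1) (V2 := V2) u).card = k - 2 := by
  rw [coordSet, Finset.card_image_of_injective _ (coord_injective u)]
  simp

end Aux

/-- Correctness of the hypergraph encoding: the `k`-element vertex sets
`{v1, v2, u_3, ..., u_k}` forming `k`-hypercliques of the encoded hypergraph
are exactly those corresponding to triangles of the tripartite graph. -/
theorem encodeHG_hypercliques_are_triangles
    {V1 V2 U : Type*} [DecidableEq V1] [DecidableEq V2] [DecidableEq U]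
    (k : ℕ) (hk : 3 ≤ k) (E12 : V1 → V2 → Prop)
    (E23 : V2 → (Fin (k - 2) → U) → Prop) (E13 : V1 → (Fin (k - 2) → U) → Prop)
    (v1 : V1) (v2 : V2) (u : Fin (k - 2) → U) :
    IsHyperclique (encodeHG k E12 E23 E13) k
        (insert (Sum.inl v1) (insert (Sum.inr (Sum.inl v2)) (coordSet u)))
      ↔ E12 v1 v2 ∧ E23 v2 u ∧ E13 v1 u := by
  classical
  have hk2 : 1 ≤ k - 2 := by omega
  set a : HVert V1 V2 U k := Sum.inl v1 with ha
  set b : HVert V1 V2 U k := Sum.inr (Sum.inl v2) with hb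
  set C : Finset (HVert V1 V2 U k) := coordSet u with hC
  set S : Finset (HVert V1 V2 U k) := insert a (insert b C) with hS
  have haC : a ∉ C := by simp [ha, hC, mem_coordSet]
  have hbC : b ∉ C := by simp [hb, hC, mem_coordSet]
  have hab : a ≠ b := by simp [ha, hb]
  have haBC : a ∉ insert b C := by simp [hab, haC]
  have hcardS : S.card = k := by
    rw [hS, Finset.card_insert_of_notMem haBC, Finset.card_insert_of_notMem hbC,
      hC, card_coordSet]
    omega
  constructor
  · rintro ⟨-, hT⟩
    -- E23
    have hT1 : insert b C ∈ encodeHG k E12 E23 E13 := by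
      apply hT _ (Finset.subset_insert _ _)
      rw [Finset.card_insert_of_notMem hbC, hC, card_coordSet]
      omega
    have h23 : E23 v2 u := by
      rcases hT1 with ⟨v1', u', hE, he⟩ | ⟨v2', u', hE, he⟩ | ⟨v1', v2', I, f, hE, hI, he⟩
      · have : (Sum.inl v1' : HVert V1 V2 U k) ∈ insert b C := by
          rw [he]; exact Finset.mem_insert_self _ _
        simp [hb, hC, mem_coordSet] at this
      · have hb' : b ∈ insert (Sum.inr (Sum.inl v2')) (coordSet u') := by
          rw [← he]; exact Finset.mem_insert_self _ _
        have hv2 : v2' = v2 := by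
          simp [hb, mem_coordSet] at hb'
          exact hb'.symm
        have hu : u' = u := by
          funext i
          have hmem : (Sum.inr (Sum.inr (i, u' i)) : HVert V1 V2 U k) ∈ insert b C := by
            rw [he]
            exact Finset.mem_insert_of_mem (mem_coordSet.mpr ⟨i, rfl⟩)
          rcases Finset.mem_insert.mp hmem with h | h
          · exact absurd h (by simp [hb])
          · obtain ⟨j, hj⟩ := mem_coordSet.mp h
            have hij : i = j ∧ u' i = u j := by simpa [Prod.ext_iff] using hj
            rw [hij.2, ← hij.1]
        rw [hv2, hu] at hE
        exact hE
      · have : (Sum.inl v1' : HVert V1 V2 U k) ∈ insert b C := by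
          rw [he]; exact Finset.mem_insert_self _ _
        simp [hb, hC, mem_coordSet] at this
    -- E13
    have hT2sub : insert a C ⊆ S := by
      rw [hS]
      intro x hx
      rcases Finset.mem_insert.mp hx with h | h
      · exact Finset.mem_insert.mpr (Or.inl h)
      · exact Finset.mem_insert_of_mem (Finset.mem_insert_of_mem h)
    have hT2 : insert a C ∈ encodeHG k E12 E23 E13 := by
      apply hT _ hT2sub
      rw [Finset.card_insert_of_notMem haC, hC, card_coordSet]
      omega
    have h13 : E13 v1 u := by
      rcases hT2 with ⟨v1', u', hE, he⟩ | ⟨v2', u', hE, he⟩ | ⟨v1', v2', I, f, hE, hI, he⟩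
      · have ha' : a ∈ insert (Sum.inl v1') (coordSet u') := by
          rw [← he]; exact Finset.mem_insert_self _ _
        have hv1 : v1' = v1 := by
          simp [ha, mem_coordSet] at ha'
          exact ha'.symm
        have hu : u' = u := by
          funext i
          have hmem : (Sum.inr (Sum.inr (i, u' i)) : HVert V1 V2 U k) ∈ insert a C := by
            rw [he]
            exact Finset.mem_insert_of_mem (mem_coordSet.mpr ⟨i, rfl⟩)
          rcases Finset.mem_insert.mp hmem with h | h
          · exact absurd h (by simp [ha])
          · obtain ⟨j, hj⟩ := mem_coordSet.mp h
            have hij : i = j ∧ u' i = u j := by simpa [Prod.ext_iff] using hj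
            rw [hij.2, ← hij.1]
        rw [hv1, hu] at hE
        exact hE
      · have : (Sum.inr (Sum.inl v2') : HVert V1 V2 U k) ∈ insert a C := by
          rw [he]; exact Finset.mem_insert_self _ _
        simp [ha, hC, mem_coordSet] at this
      · have : (Sum.inr (Sum.inl v2') : HVert V1 V2 U k) ∈ insert a C := by
          rw [he]
          exact Finset.mem_insert_of_mem (Finset.mem_insert_self _ _)
        simp [ha, hC, mem_coordSet] at this
    -- E12
    have h12 : E12 v1 v2 := by
      set i0 : Fin (k - 2) := ⟨0, by omega⟩ with hi0
      set x0 : HVert V1 V2 U k := Sum.inr (Sum.inr (i0, u i0)) with hx0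
      have hx0S : x0 ∈ S := by
        rw [hS]
        exact Finset.mem_insert_of_mem (Finset.mem_insert_of_mem
          (mem_coordSet.mpr ⟨i0, rfl⟩))
      have hT3 : S.erase x0 ∈ encodeHG k E12 E23 E13 := by
        apply hT _ (Finset.erase_subset _ _)
        rw [Finset.card_erase_of_mem hx0S, hcardS]
      have haT3 : a ∈ S.erase x0 := by
        rw [Finset.mem_erase]
        exact ⟨by simp [ha, hx0], by rw [hS]; exact Finset.mem_insert_self _ _⟩
      have hbT3 : b ∈ S.erase x0 := by
        rw [Finset.mem_erase]
        refine ⟨by simp [hb, hx0], ?_⟩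
        rw [hS]; exact Finset.mem_insert_of_mem (Finset.mem_insert_self _ _)
      rcases hT3 with ⟨v1', u', hE, he⟩ | ⟨v2', u', hE, he⟩ | ⟨v1', v2', I, f, hE, hI, he⟩
      · rw [he] at hbT3
        simp [hb, mem_coordSet] at hbT3
      · rw [he] at haT3
        simp [ha, mem_coordSet] at haT3
      · rw [he] at haT3 hbT3
        have hv1 : v1' = v1 := by
          simp [ha] at haT3
          exact haT3.symm
        have hv2 : v2' = v2 := by
          simp [hb] at hbT3
          exact hbT3.symm
        rw [hv1, hv2] at hE
        exact hE
    exact ⟨h12, h23, h13⟩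
  · rintro ⟨h12, h23, h13⟩
    refine ⟨hcardS, ?_⟩
    intro T hTS hTc
    have hsd : (S \ T).card = 1 := by
      rw [Finset.card_sdiff_of_subset hTS, hcardS, hTc]
      omega
    obtain ⟨x, hx⟩ := Finset.card_eq_one.mp hsd
    have hxS : x ∈ S := (Finset.mem_sdiff.mp (hx ▸ Finset.mem_singleton_self x)).1
    have hTeq : T = S.erase x := by
      rw [Finset.erase_eq, ← hx, Finset.sdiff_sdiff_self_left,
        Finset.inter_eq_right.mpr hTS]
    rcases Finset.mem_insert.mp hxS with hxa | hx'
    · -- x = a : edge of type 2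
      subst hxa
      have : T = insert b C := by
        rw [hTeq, hS, Finset.erase_insert haBC]
      exact Or.inr (Or.inl ⟨v2, u, h23, this⟩)
    rcases Finset.mem_insert.mp hx' with hxb | hxC
    · -- x = b : edge of type 1
      subst hxb
      have : T = insert a C := by
        rw [hTeq, hS, Finset.erase_insert_of_ne hab, Finset.erase_insert hbC]
      exact Or.inl ⟨v1, u, h13, this⟩
    · -- x is a coordinate vertex : edge of type 3
      obtain ⟨j, hj⟩ := mem_coordSet.mp hxC
      subst hj
      refine Or.inr (Or.inr ⟨v1, v2, Finset.univ.erase j, u, h12, ?_, ?_⟩)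
      · rw [Finset.card_erase_of_mem (Finset.mem_univ j), Finset.card_univ,
          Fintype.card_fin]
        omega
      · have himg : (Finset.univ.erase j).image
            (fun i : Fin (k - 2) => (Sum.inr (Sum.inr (i, u i)) : HVert V1 V2 U k))
            = C.erase (Sum.inr (Sum.inr (j, u j))) := by
          rw [hC, coordSet, Finset.image_erase (coord_injective u)]
        rw [hTeq, hS, himg, Finset.erase_insert_of_ne (by simp [ha]),
          Finset.erase_insert_of_ne (by simp [hb])]
end

section
/- Let Q1 be a self-join-free conjunctive query, Q2 a conjunctive query, and Q1^+ an extension of Q1 obtained by repeatedly adding edges (atoms) whose variable sets are connected subsets of the hypergraph of Q1 contained in h(free(Q2)) (where h is the unique body-homomorphism from Q2 to Q1). If there is a path between vertices u and w in the hypergraph of Q1^+, then there is a simple chordless path between u and w in the hypergraph of Q1 using only vertices that appear on the Q1^+-path or lie in h(free(Q2)). -/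
/-- A set `S` of vertices is connected within the hypergraph `H1`: any two of
its vertices are joined by a path of `H1` staying inside `S`. -/
def ConnectedIn {V : Type*} (H1 : Set (Set V)) (S : Set V) : Prop :=
  ∀ x ∈ S, ∀ y ∈ S, ∃ (p : ℕ → V) (m : ℕ), 1 ≤ m ∧ HIsPathOn H1 p m ∧
    (∀ i, i < m → p i ∈ S) ∧ p 0 = x ∧ p (m - 1) = y

lemma walk_extract {V : Type*} (H1 : Set (Set V)) (S : Set V) :
    ∀ l : ℕ, ∀ q : ℕ → V, 1 ≤ l → HIsPathOn H1 q l → (∀ i, i < l → q i ∈ S) →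
    ∃ (q' : ℕ → V) (l' : ℕ), 1 ≤ l' ∧ HIsPathOn H1 q' l' ∧ SimpleOn q' l' ∧
      HChordlessOn H1 q' l' ∧ q' 0 = q 0 ∧ q' (l' - 1) = q (l - 1) ∧
      ∀ i, i < l' → q' i ∈ S := by
  intro l
  induction l using Nat.strong_induction_on with
  | _ l IH =>
  intro q hl hpath hS
  by_cases hsimp : SimpleOn q l
  · by_cases hch : HChordlessOn H1 q l
    · exact ⟨q, l, hl, hpath, hsimp, hch, rfl, rfl, hS⟩
    · simp only [HChordlessOn, not_forall] at hch
      obtain ⟨i, j, hj, hij, hadj⟩ := hch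
      rw [not_not] at hadj
      set d := j - i - 1 with hd
      have hd1 : 1 ≤ d := by omega
      set q2 : ℕ → V := fun n => if n ≤ i then q n else q (n + d) with hq2
      have key : ∀ n, n < l - d → q2 n ∈ S := by
        intro n hn
        simp only [hq2]
        split <;> [exact hS _ (by omega); exact hS _ (by omega)]
      have hpath2 : HIsPathOn H1 q2 (l - d) := by
        intro n hn
        rcases lt_trichotomy n i with h | h | h
        · have e1 : q2 n = q n := if_pos (by omega)
          have e2 : q2 (n+1) = q (n+1) := if_pos (by omega)
          rw [e1, e2]; exact hpath n (by omega)
        · subst h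
          have e1 : q2 n = q n := if_pos le_rfl
          have e2 : q2 (n+1) = q (n + 1 + d) := if_neg (by omega)
          rw [e1, e2]
          have e3 : n + 1 + d = j := by omega
          rw [e3]; exact hadj
        · have e1 : q2 n = q (n + d) := if_neg (by omega)
          have e2 : q2 (n+1) = q (n + 1 + d) := if_neg (by omega)
          rw [e1, e2]
          have e3 : n + 1 + d = n + d + 1 := by ring
          rw [e3]; exact hpath (n + d) (by omega)
      have hlast2 : q2 (l - d - 1) = q (l - 1) := by
        have e1 : q2 (l - d - 1) = q (l - d - 1 + d) := if_neg (by omega)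
        rw [e1]; congr 1; omega
      obtain ⟨q', l', h1, h2, h3, h4, h5, h6, h7⟩ :=
        IH (l - d) (by omega) q2 (by omega) hpath2 key
      refine ⟨q', l', h1, h2, h3, h4, ?_, ?_, h7⟩
      · rw [h5]; simp [hq2]
      · rw [h6, hlast2]
  · have shorten : ∀ i j, i < j → j < l → q i = q j →
        ∃ (q' : ℕ → V) (l' : ℕ), 1 ≤ l' ∧ HIsPathOn H1 q' l' ∧ SimpleOn q' l' ∧
          HChordlessOn H1 q' l' ∧ q' 0 = q 0 ∧ q' (l' - 1) = q (l - 1) ∧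
          ∀ i, i < l' → q' i ∈ S := by
      intro i j hij hj heq
      set d := j - i with hd
      have hd1 : 1 ≤ d := by omega
      set q2 : ℕ → V := fun n => if n ≤ i then q n else q (n + d) with hq2
      have key : ∀ n, n < l - d → q2 n ∈ S := by
        intro n hn
        simp only [hq2]
        split <;> [exact hS _ (by omega); exact hS _ (by omega)]
      have hpath2 : HIsPathOn H1 q2 (l - d) := by
        intro n hn
        rcases lt_trichotomy n i with h | h | h
        · have e1 : q2 n = q n := if_pos (by omega)
          have e2 : q2 (n+1) = q (n+1) := if_pos (by omega)
          rw [e1, e2]; exact hpath n (by omega)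
        · subst h
          have e1 : q2 n = q n := if_pos le_rfl
          have e2 : q2 (n+1) = q (n + 1 + d) := if_neg (by omega)
          rw [e1, e2, heq]
          have e3 : n + 1 + d = j + 1 := by omega
          rw [e3]; exact hpath j (by omega)
        · have e1 : q2 n = q (n + d) := if_neg (by omega)
          have e2 : q2 (n+1) = q (n + 1 + d) := if_neg (by omega)
          rw [e1, e2]
          have e3 : n + 1 + d = n + d + 1 := by ring
          rw [e3]; exact hpath (n + d) (by omega)
      have hlast2 : q2 (l - d - 1) = q (l - 1) := by
        rcases eq_or_lt_of_le (show i ≤ l - d - 1 by omega) with h | h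
        · have e1 : q2 (l - d - 1) = q (l - d - 1) := if_pos (by omega)
          rw [e1, ← h, heq]; congr 1; omega
        · have e1 : q2 (l - d - 1) = q (l - d - 1 + d) := if_neg (by omega)
          rw [e1]; congr 1; omega
      obtain ⟨q', l', h1, h2, h3, h4, h5, h6, h7⟩ :=
        IH (l - d) (by omega) q2 (by omega) hpath2 key
      refine ⟨q', l', h1, h2, h3, h4, ?_, ?_, h7⟩
      · rw [h5]; simp [hq2]
      · rw [h6, hlast2]
    simp only [SimpleOn, not_forall] at hsimp
    obtain ⟨i, j, hi, hj, heq, hne⟩ := hsimp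
    rcases lt_trichotomy i j with h | h | h
    · exact shorten i j h hj heq
    · exact absurd h hne
    · exact shorten j i h hi heq.symm

lemma build_walk {V : Type*} (H1 H2 : Set (Set V)) (W : Set V)
    (hext : ∀ e ∈ H2, e ∈ H1 ∨ (e ⊆ W ∧ ConnectedIn H1 e)) (p : ℕ → V) :
    ∀ m : ℕ, 1 ≤ m → HIsPathOn H2 p m →
    ∃ (q : ℕ → V) (l : ℕ), 1 ≤ l ∧ HIsPathOn H1 q l ∧
      q 0 = p 0 ∧ q (l - 1) = p (m - 1) ∧
      ∀ i, i < l → (∃ j, j < m ∧ q i = p j) ∨ q i ∈ W := by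
  intro m
  induction m with
  | zero => omega
  | succ n IH =>
  intro _ hp
  rcases Nat.eq_or_lt_of_le (show 1 ≤ n + 1 by omega) with h | h
  · have hn0 : n = 0 := by omega
    subst hn0
    exact ⟨p, 1, le_rfl, fun i hi => by omega, rfl, rfl,
      fun i hi => Or.inl ⟨i, by omega, rfl⟩⟩
  · have hn : 1 ≤ n := by omega
    obtain ⟨q, l, hl, hqpath, hq0, hqlast, hqS⟩ :=
      IH hn (fun i hi => hp i (by omega))
    have hstep : HAdj H2 (p (n - 1)) (p n) := by
      have := hp (n - 1) (by omega)
      rwa [show n - 1 + 1 = n by omega] at this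
    obtain ⟨hne, e, heH2, hpe1, hpe2⟩ := hstep
    rcases hext e heH2 with heH1 | ⟨heW, hconn⟩
    · -- append p n
      refine ⟨fun t => if t < l then q t else p n, l + 1, by omega, ?_, ?_, ?_, ?_⟩
      · intro t ht
        rcases lt_trichotomy (t + 1) l with h2 | h2 | h2
        · simp only [if_pos (show t < l by omega), if_pos h2]
          exact hqpath t h2
        · simp only [if_pos (show t < l by omega), if_neg (show ¬ t + 1 < l by omega)]
          have : q t = p (n - 1) := by rw [← hqlast]; congr 1; omega
          rw [this]
          exact ⟨hne, e, heH1, hpe1, hpe2⟩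
        · omega
      · simp only [if_pos (show (0:ℕ) < l by omega)]; exact hq0
      · simp only [show l + 1 - 1 = l from rfl, if_neg (lt_irrefl l)]
        congr 1
      · intro i hi
        by_cases h2 : i < l
        · simp only [if_pos h2]
          rcases hqS i h2 with ⟨j, hj, hji⟩ | hW
          · exact Or.inl ⟨j, by omega, hji⟩
          · exact Or.inr hW
        · simp only [if_neg h2]
          exact Or.inl ⟨n, by omega, rfl⟩
    · -- connect through e
      obtain ⟨r, k, hk, hrpath, hrS, hr0, hrlast⟩ := hconn _ hpe1 _ hpe2
      have hk2 : 2 ≤ k := by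
        by_contra h2
        have : k = 1 := by omega
        apply hne
        rw [← hr0, ← hrlast, this]
      refine ⟨fun t => if t < l then q t else r (t - (l - 1)), l + (k - 1),
        by omega, ?_, ?_, ?_, ?_⟩
      · intro t ht
        rcases lt_trichotomy (t + 1) l with h2 | h2 | h2
        · simp only [if_pos (show t < l by omega), if_pos h2]
          exact hqpath t h2
        · simp only [if_pos (show t < l by omega),
            if_neg (show ¬ t + 1 < l by omega)]
          have e1 : q t = r 0 := by
            rw [hr0, ← hqlast]; congr 1; omega
          have e2 : t + 1 - (l - 1) = 1 := by omega
          rw [e1, e2]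
          exact hrpath 0 (by omega)
        · simp only [if_neg (show ¬ t < l by omega),
            if_neg (show ¬ t + 1 < l by omega)]
          have e2 : t + 1 - (l - 1) = (t - (l - 1)) + 1 := by omega
          rw [e2]
          exact hrpath (t - (l - 1)) (by omega)
      · simp only [if_pos (show (0:ℕ) < l by omega)]; exact hq0
      · simp only [if_neg (show ¬ l + (k - 1) - 1 < l by omega)]
        have e2 : l + (k - 1) - 1 - (l - 1) = k - 1 := by omega
        rw [e2, hrlast]
        congr 1
      · intro i hi
        by_cases h2 : i < l
        · simp only [if_pos h2]
          rcases hqS i h2 with ⟨j, hj, hji⟩ | hW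
          · exact Or.inl ⟨j, by omega, hji⟩
          · exact Or.inr hW
        · simp only [if_neg h2]
          exact Or.inr (heW (hrS _ (by omega)))

/-- Let `H1` be the hypergraph of `Q1` and `H2` that of an extension `Q1⁺`,
where every hyperedge of `H2` is either an original hyperedge of `H1` or a set
of vertices connected in `H1` and contained in `W = h(free(Q2))`. Then every
path in `H2` between `u` and `w` yields a simple chordless path in `H1`
between `u` and `w` using only vertices of the original path or of `W`. -/
theorem extension_path_to_original_chordless_path
    {V : Type*} (H1 H2 : Set (Set V)) (W : Set V)
    (hext : ∀ e ∈ H2, e ∈ H1 ∨ (e ⊆ W ∧ ConnectedIn H1 e))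
    (u w : V) (p : ℕ → V) (m : ℕ) (hm : 1 ≤ m)
    (hp : HIsPathOn H2 p m) (h0 : p 0 = u) (hlast : p (m - 1) = w) :
    ∃ (q : ℕ → V) (l : ℕ), 1 ≤ l ∧
      HIsPathOn H1 q l ∧ SimpleOn q l ∧ HChordlessOn H1 q l ∧
      q 0 = u ∧ q (l - 1) = w ∧
      ∀ i, i < l → (∃ j, j < m ∧ q i = p j) ∨ q i ∈ W := by
  obtain ⟨q, l, hl, hqpath, hq0, hqlast, hqS⟩ := build_walk H1 H2 W hext p m hm hp
  obtain ⟨q', l', h1, h2, h3, h4, h5, h6, h7⟩ :=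
    walk_extract H1 {v | (∃ j, j < m ∧ v = p j) ∨ v ∈ W} l q hl hqpath hqS
  exact ⟨q', l', h1, h2, h3, h4, by rw [h5, hq0, h0], by rw [h6, hqlast, hlast], h7⟩
end
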